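/- There exists a set A ⊆ ℕ that is additively thick, multiplicatively thick, and contains no exponential triple: there do not exist x, y ∈ A with x ≠ y and x^y ∈ A. -/

import Mathlib

/-- `A` is additively thick: it contains arbitrarily long intervals. -/
def AddThick (A : Set ℕ) : Prop :=
  ∀ k : ℕ, ∃ a : ℕ, ∀ i ≤ k, a + i ∈ A

/-- `A` is multiplicatively thick: for every `k` there is `a ≥ 1` with
`{a, 2a, …, ka} ⊆ A`. -/
def MulThick (A : Set ℕ) : Prop :=
  ∀ k : ℕ, ∃ a : ℕ, 1 ≤ a ∧ ∀ i : ℕ, 1 ≤ i → i ≤ k → i * a ∈ A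

def aseq : ℕ → ℕ
  | 0 => 3
  | n + 1 => ((n + 2) * aseq n) ^ ((n + 2) * aseq n) + 1

def bseq (n : ℕ) : ℕ := (n + 2) * aseq n

lemma aseq_succ (n : ℕ) : aseq (n + 1) = bseq n ^ bseq n + 1 := rfl

lemma aseq_ge (n : ℕ) : n + 3 ≤ aseq n := by
  induction n with
  | zero => simp [aseq]
  | succ n ih =>
    have hb2 : (n + 2) * (n + 3) ≤ bseq n := Nat.mul_le_mul_left _ ih
    have h2 : bseq n ≤ bseq n ^ bseq n := Nat.le_self_pow (by nlinarith) _
    rw [aseq_succ]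
    nlinarith

lemma aseq_le_bseq (n : ℕ) : aseq n ≤ bseq n := Nat.le_mul_of_pos_left _ (by omega)

lemma bseq_lt_aseq_succ (n : ℕ) : bseq n < aseq (n + 1) := by
  rw [aseq_succ]
  have h2 : bseq n ≤ bseq n ^ bseq n := Nat.le_self_pow (by have := aseq_ge n; have := aseq_le_bseq n; omega) _
  omega

lemma aseq_mono : Monotone aseq :=
  monotone_nat_of_le_succ fun n => le_trans (aseq_le_bseq n) (bseq_lt_aseq_succ n).le

lemma bseq_mono : Monotone bseq := by
  apply monotone_nat_of_le_succ
  intro n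
  exact le_trans (bseq_lt_aseq_succ n).le (aseq_le_bseq (n + 1))

lemma sq_lt_three_pow (n : ℕ) : n ^ 2 < 3 ^ n := by
  induction n with
  | zero => norm_num
  | succ n ih =>
    have h : n < 3 ^ n := Nat.lt_pow_self (show (1:ℕ) < 3 by norm_num)
    ring_nf
    ring_nf at ih
    nlinarith

theorem thick_without_exponential_triple :
    ∃ A : Set ℕ, AddThick A ∧ MulThick A ∧
      ¬ ∃ x ∈ A, ∃ y ∈ A, x ≠ y ∧ x ^ y ∈ A := by
  refine ⟨{m | ∃ n, aseq n ≤ m ∧ m ≤ bseq n}, ?_, ?_, ?_⟩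
  · intro k
    refine ⟨aseq k, fun i hi => ⟨k, by omega, ?_⟩⟩
    have h1 := aseq_ge k
    have : (k + 2) * aseq k = aseq k + (k + 1) * aseq k := by ring
    have : aseq k + i ≤ bseq k := by
      unfold bseq; nlinarith
    exact this
  · intro k
    refine ⟨aseq k, by have := aseq_ge k; omega, fun i hi1 hik => ⟨k, ?_, ?_⟩⟩
    · exact Nat.le_mul_of_pos_left _ (by omega)
    · unfold bseq
      have := aseq_ge k
      exact Nat.mul_le_mul_right _ (by omega)
  · rintro ⟨x, ⟨m, hxm, hxm'⟩, y, ⟨k, hyk, hyk'⟩, hxy, j, hj, hj'⟩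
    set N := max m k with hN
    have hxN : x ≤ bseq N := hxm'.trans (bseq_mono (le_max_left m k))
    have hyN : y ≤ bseq N := hyk'.trans (bseq_mono (le_max_right m k))
    have hx3 : 3 ≤ x := le_trans (by have := aseq_ge m; omega) hxm
    have hy3 : 3 ≤ y := le_trans (by have := aseq_ge k; omega) hyk
    have haN := aseq_ge N
    -- upper bound
    have hup : x ^ y < aseq (N + 1) := by
      rw [aseq_succ]
      have h1 : x ^ y ≤ bseq N ^ y := Nat.pow_le_pow_left hxN y
      have h2 : bseq N ^ y ≤ bseq N ^ bseq N := Nat.pow_le_pow_right (by have := aseq_le_bseq N; omega) hyN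
      omega
    -- lower bound
    have hlow : bseq N < x ^ y := by
      rcases max_cases m k with ⟨he, _⟩ | ⟨he, _⟩
      · -- N = m, x ≥ aseq N
        have hx : aseq N ≤ x := by rw [hN, he]; exact hxm
        calc bseq N = (N + 2) * aseq N := rfl
          _ < aseq N * aseq N * aseq N := by nlinarith
          _ = aseq N ^ 3 := by ring
          _ ≤ x ^ 3 := Nat.pow_le_pow_left hx 3
          _ ≤ x ^ y := Nat.pow_le_pow_right (by omega) hy3
      · -- N = k, y ≥ aseq N
        have hy : aseq N ≤ y := by rw [hN, he]; exact hyk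
        have h3 : aseq N ^ 2 < 3 ^ aseq N := sq_lt_three_pow (aseq N)
        calc bseq N = (N + 2) * aseq N := rfl
          _ < aseq N ^ 2 := by ring_nf; nlinarith
          _ < 3 ^ aseq N := h3
          _ ≤ 3 ^ y := Nat.pow_le_pow_right (by norm_num) hy
          _ ≤ x ^ y := Nat.pow_le_pow_left hx3 y
    -- x^y lies in the gap
    rcases le_or_gt j N with hjN | hjN
    · exact absurd (hj'.trans (bseq_mono hjN)) (by omega)
    · have : aseq (N + 1) ≤ aseq j := aseq_mono hjN
      omega
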